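/- Let X be a compact topological space and let A ⊆ C(X) be norm-bounded and countably precompact for the topology of pointwise convergence (every sequence in A has a pointwise cluster point in C(X)). Then every function in the closure of A for the topology of pointwise convergence is the uniform limit (i.e., limit in the supremum norm) of a sequence of elements of conv(A), the convex hull of A. -/

import Mathlib

open Filter Topology

private lemma hpow2 (k : ℕ) : (2:ℝ)^k * (2⁻¹)^k = 1 := by
  rw [← mul_pow]; norm_num

private lemma tsum_mem_closed_convex {E : Type*} [NormedAddCommGroup E] [NormedSpace ℝ E]
    {C : Set E} (hconv : Convex ℝ C) (hclosed : IsClosed C)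
    {x : ℕ → E} (hx : ∀ j, x j ∈ C) {a : ℕ → ℝ} (ha : ∀ j, 0 ≤ a j)
    (hsum : HasSum a 1) (hS : Summable fun j => a j • x j) :
    (∑' j, a j • x j) ∈ C := by
  have hsm : Tendsto (fun m => ∑ j ∈ Finset.range m, a j • x j) atTop (𝓝 (∑' j, a j • x j)) :=
    hS.hasSum.tendsto_sum_nat
  have hsc : Tendsto (fun m => ∑ j ∈ Finset.range m, a j) atTop (𝓝 1) :=
    hsum.tendsto_sum_nat
  set y : ℕ → E := fun m => (∑ j ∈ Finset.range m, a j • x j)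
      + (1 - ∑ j ∈ Finset.range m, a j) • x 0 with hy
  have hymem : ∀ m, y m ∈ C := by
    intro m
    have h1 : ∀ j ∈ Finset.range (m+1), (0:ℝ) ≤ (if j < m then a j else 1 - ∑ i ∈ Finset.range m, a i) := by
      intro j _
      split
      · exact ha j
      · have := sum_le_hasSum (Finset.range m) (fun i _ => ha i) hsum
        linarith
    have h2 : (∑ j ∈ Finset.range (m+1), (if j < m then a j else 1 - ∑ i ∈ Finset.range m, a i)) = 1 := by
      rw [Finset.sum_range_succ]
      have : ∀ j ∈ Finset.range m, (if j < m then a j else 1 - ∑ i ∈ Finset.range m, a i) = a j := by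
        intro j hj; rw [if_pos (Finset.mem_range.mp hj)]
      rw [Finset.sum_congr rfl this, if_neg (lt_irrefl m)]
      ring
    have h3 := hconv.sum_mem h1 h2
      (z := fun j => if j < m then x j else x 0) (fun j _ => by split <;> exact hx _)
    have : (∑ j ∈ Finset.range (m+1),
        (if j < m then a j else 1 - ∑ i ∈ Finset.range m, a i) • (if j < m then x j else x 0)) = y m := by
      rw [Finset.sum_range_succ]
      have : ∀ j ∈ Finset.range m,
          (if j < m then a j else 1 - ∑ i ∈ Finset.range m, a i) • (if j < m then x j else x 0)
            = a j • x j := by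
        intro j hj
        rw [if_pos (Finset.mem_range.mp hj), if_pos (Finset.mem_range.mp hj)]
      rw [Finset.sum_congr rfl this, if_neg (lt_irrefl m), if_neg (lt_irrefl m)]
    rw [← this]; exact h3
  have hytend : Tendsto y atTop (𝓝 (∑' j, a j • x j)) := by
    have : Tendsto (fun m => (1 - ∑ j ∈ Finset.range m, a j) • x 0) atTop (𝓝 (((1:ℝ) - 1) • x 0)) :=
      ((tendsto_const_nhds.sub hsc).smul tendsto_const_nhds)
    have := hsm.add this
    simpa using this
  exact hclosed.mem_of_tendsto hytend (Eventually.of_forall hymem)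

private lemma simons_step {X : Type*} [TopologicalSpace X] [CompactSpace X] [Nonempty X]
    (u : ℕ → C(X, ℝ)) (M : ℝ) (hM : ∀ n, ‖u n‖ ≤ M)
    (hu : ∀ x : X, Tendsto (fun n => u n x) atTop (𝓝 0))
    {ε : ℝ} (hε : 0 < ε) :
    ∃ w ∈ convexHull ℝ (Set.range u), ‖w‖ < ε := by
  classical
  -- the nested closed convex sets
  set W : ℕ → Set C(X,ℝ) := fun n => closure (convexHull ℝ (u '' Set.Ici n)) with hW
  have hWconv : ∀ n, Convex ℝ (W n) := fun n => (convex_convexHull ℝ _).closure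
  have hWclosed : ∀ n, IsClosed (W n) := fun n => isClosed_closure
  have hWmem : ∀ n m, n ≤ m → u m ∈ W n := fun n m hnm =>
    subset_closure (subset_convexHull ℝ _ ⟨m, hnm, rfl⟩)
  have hWmono : ∀ {n m}, n ≤ m → W m ⊆ W n := fun {n m} h =>
    closure_mono (convexHull_mono (Set.image_mono (Set.Ici_subset_Ici.mpr h)))
  have hWbdd : ∀ n, ∀ w ∈ W n, ‖w‖ ≤ M := by
    intro n w hw
    have : W n ⊆ Metric.closedBall 0 M := by
      apply closure_minimal _ Metric.isClosed_closedBall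
      apply convexHull_min _ (convex_closedBall _ _)
      rintro y ⟨m, -, rfl⟩
      simpa [mem_closedBall_zero_iff] using hM m
    simpa [mem_closedBall_zero_iff] using this hw
  -- coefficients
  set c : ℕ → ℝ := fun k => (2⁻¹:ℝ) ^ (k+1) with hc
  set q : ℕ → ℝ := fun k => (2⁻¹:ℝ) ^ k with hq
  set δ : ℕ → ℝ := fun k => ε * (2⁻¹:ℝ) ^ (2*k+3) with hδ
  have hcpos : ∀ k, (0:ℝ) < c k := fun k => by positivity
  have hδpos : ∀ k, (0:ℝ) < δ k := fun k => by positivity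
  have hqc : ∀ k, q k = 2 * c k := by
    intro k; simp only [hq, hc, pow_succ]; ring
  have hcsum : ∀ k, HasSum (fun j => c (j+k)) ((2⁻¹:ℝ)^k) := by
    intro k
    have hg : HasSum (fun j : ℕ => (2⁻¹:ℝ)^j) 2 := by
      have := hasSum_geometric_of_lt_one (r := (2⁻¹:ℝ)) (by norm_num) (by norm_num)
      convert this using 1
      norm_num
    have hgs := hg.mul_right ((2⁻¹:ℝ)^(k+1))
    have heq : (fun j : ℕ => (2⁻¹:ℝ)^j * (2⁻¹)^(k+1)) = fun j => c (j+k) := by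
      funext j
      have hj : j + k + 1 = j + (k+1) := by omega
      simp only [hc, hj, pow_add]
      ring
    have h2 : (2:ℝ) * (2⁻¹)^(k+1) = (2⁻¹)^k := by
      rw [pow_succ]; ring_nf
    rw [heq, h2] at hgs
    exact hgs
  -- near-minimizers
  have EX : ∀ (k : ℕ) (z : C(X,ℝ)), ∃ v, v ∈ W (k+1) ∧
      ∀ w ∈ W (k+1), ‖z + q k • v‖ ≤ ‖z + q k • w‖ + δ k := by
    intro k z
    set s : Set ℝ := (fun w => ‖z + q k • w‖) '' W (k+1) with hs
    have hne : s.Nonempty := ⟨_, ⟨u (k+1), hWmem _ _ le_rfl, rfl⟩⟩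
    have hbdd : ∀ y ∈ s, (0:ℝ) ≤ y := by rintro y ⟨w, -, rfl⟩; exact norm_nonneg _
    obtain ⟨a, ⟨v, hv, rfl⟩, hlt⟩ := Real.lt_sInf_add_pos hne (hδpos k)
    refine ⟨v, hv, fun w hw => ?_⟩
    have : sInf s ≤ ‖z + q k • w‖ := csInf_le ⟨0, fun y hy => hbdd y hy⟩ ⟨w, hw, rfl⟩
    linarith
  set sel : ℕ → C(X,ℝ) → C(X,ℝ) := fun k z => (EX k z).choose with hsel
  set Z : ℕ → C(X,ℝ) := fun n => n.rec (0 : C(X,ℝ)) (fun k Zk => Zk + c k • sel k Zk) with hZ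
  set v : ℕ → C(X,ℝ) := fun k => sel k (Z k) with hvdef
  have hZ0 : Z 0 = 0 := rfl
  have hZsucc : ∀ k, Z (k+1) = Z k + c k • v k := fun k => rfl
  have hv : ∀ k, v k ∈ W (k+1) := fun k => (EX k (Z k)).choose_spec.1
  have hmin : ∀ k, ∀ w ∈ W (k+1), ‖Z k + q k • v k‖ ≤ ‖Z k + q k • w‖ + δ k :=
    fun k => (EX k (Z k)).choose_spec.2
  have hvnorm : ∀ k, ‖v k‖ ≤ M := fun k => hWbdd _ _ (hv k)
  have hM0 : 0 ≤ M := le_trans (norm_nonneg _) (hM 0)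
  -- summability
  have hsummc : ∀ k, Summable (fun j => c (j+k)) := fun k => (hcsum k).summable
  have S1 : Summable (fun k => c k • v k) := by
    apply Summable.of_norm_bounded (g := fun k => c k * M)
    · simpa using (hcsum 0).summable.mul_right M
    · intro k
      refine le_trans (norm_smul_le (c _) (v _)) ?_
      rw [Real.norm_eq_abs, abs_of_pos (hcpos k)]
      exact mul_le_mul_of_nonneg_left (hvnorm k) (hcpos k).le
  set h : C(X,ℝ) := ∑' k, c k • v k with hh
  set Tail : ℕ → C(X,ℝ) := fun k => ∑' j, c (j+k) • v (j+k) with hTail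
  have hZr : ∀ k, Z k = ∑ j ∈ Finset.range k, c j • v j := by
    intro k; induction k with
    | zero => simp [hZ0]
    | succ k ih => rw [hZsucc, ih, Finset.sum_range_succ]
  have hsplit : ∀ k, Z k + Tail k = h := by
    intro k
    rw [hZr k]
    exact Summable.sum_add_tsum_nat_add k S1
  have hTailsummable : ∀ k, Summable (fun j => c (j+k) • v (j+k)) := by
    intro k
    exact ((summable_nat_add_iff k).mpr S1).congr (fun j => rfl)
  have hTailrec : ∀ k, Tail k = c k • v k + Tail (k+1) := by
    intro k
    have h1 := Summable.tsum_eq_zero_add (hTailsummable k)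
    simp only [zero_add] at h1
    calc Tail k = ∑' j, c (j+k) • v (j+k) := rfl
      _ = c k • v k + ∑' j, c (j+1+k) • v (j+1+k) := h1
      _ = c k • v k + Tail (k+1) := by
          congr 1
          apply tsum_congr
          intro j
          have hjk : j+1+k = j+(k+1) := by omega
          rw [hjk]
  have hTailnorm : ∀ k, ‖Tail k‖ ≤ (2⁻¹:ℝ)^k * M := by
    intro k
    have hsb : Summable (fun j => c (j+k) * M) := ((hcsum k).mul_right M).summable
    have hb : ∀ j, ‖c (j+k) • v (j+k)‖ ≤ c (j+k) * M := by
      intro j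
      refine le_trans (norm_smul_le (c _) (v _)) ?_
      rw [Real.norm_eq_abs, abs_of_pos (hcpos _)]
      exact mul_le_mul_of_nonneg_left (hvnorm _) (hcpos _).le
    have hsn : Summable (fun j => ‖c (j+k) • v (j+k)‖) :=
      Summable.of_nonneg_of_le (fun j => norm_nonneg _) hb hsb
    calc ‖Tail k‖ ≤ ∑' j, ‖c (j+k) • v (j+k)‖ := norm_tsum_le_tsum_norm hsn
      _ ≤ ∑' j, c (j+k) * M := Summable.tsum_le_tsum hb hsn hsb
      _ = (2⁻¹:ℝ)^k * M := ((hcsum k).mul_right M).tsum_eq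
  -- maximizer of |h|
  obtain ⟨b, hb'⟩ := Continuous.exists_forall_ge (f := fun x : X => |h x|)
    (map_continuous h).abs (by rw [Filter.cocompact_eq_bot]; exact tendsto_bot)
  have hnorm_b : ‖h‖ = |h b| := by
    refine le_antisymm ?_ ?_
    · rw [ContinuousMap.norm_le _ (abs_nonneg _)]
      intro x
      rw [Real.norm_eq_abs]
      exact hb' x
    · rw [← Real.norm_eq_abs]
      exact h.norm_coe_le_norm b
  set sg : ℝ := if h b < 0 then -1 else 1 with hsg
  have hsgh : sg * h b = |h b| := by
    by_cases hbneg : h b < 0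
    · simp only [hsg, if_pos hbneg]
      rw [abs_of_neg hbneg]; ring
    · simp only [hsg, if_neg hbneg]
      rw [abs_of_nonneg (not_lt.mp hbneg)]; ring
  have hsgabs : |sg| = 1 := by
    by_cases hbneg : h b < 0 <;> simp [hsg, hbneg]
  have hφle : ∀ w : C(X,ℝ), sg * w b ≤ ‖w‖ := by
    intro w
    calc sg * w b ≤ |sg * w b| := le_abs_self _
      _ = |sg| * |w b| := abs_mul _ _
      _ = |w b| := by rw [hsgabs, one_mul]
      _ ≤ ‖w‖ := by rw [← Real.norm_eq_abs]; exact w.norm_coe_le_norm b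
  set τ : ℕ → ℝ := fun k => sg * Tail k b with hτ
  have hTail0 : Tail 0 = h := by
    have h1 := hsplit 0
    simpa [hZ0] using h1
  have hτ0 : τ 0 = ‖h‖ := by
    simp only [hτ, hTail0]
    rw [hsgh, hnorm_b]
  -- the infinite-tail test elements
  have hwstar : ∀ k, ((2:ℝ)^(k+1)) • Tail (k+1) ∈ W (k+1) := by
    intro k
    have hTsum : HasSum (fun j => c (j+(k+1)) • v (j+(k+1))) (Tail (k+1)) :=
      (hTailsummable (k+1)).hasSum
    have hws : HasSum (fun j => ((2:ℝ)^(k+1) * c (j+(k+1))) • v (j+(k+1)))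
        (((2:ℝ)^(k+1)) • Tail (k+1)) := by
      have hfe : (fun j => ((2:ℝ)^(k+1) * c (j+(k+1))) • v (j+(k+1)))
          = fun j => ((2:ℝ)^(k+1)) • (c (j+(k+1)) • v (j+(k+1))) := by
        funext j; rw [smul_smul]
      rw [hfe]
      exact hTsum.const_smul _
    rw [← hws.tsum_eq]
    refine tsum_mem_closed_convex (hWconv (k+1)) (hWclosed (k+1))
      (fun j => hWmono (by omega) (hv (j+(k+1)))) (fun j => by positivity)
      ?_ hws.summable
    have h1 := (hcsum (k+1)).mul_left ((2:ℝ)^(k+1))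
    rwa [hpow2 (k+1)] at h1
  -- key inequality from near-minimality
  have keyE : ∀ k, q k * (sg * v k b) ≤ τ k + δ k := by
    intro k
    have hqc2 : q k * 2⁻¹ = c k := by simp only [hq, hc, pow_succ]
    have hck2 : c k * (2:ℝ)^(k+1) = 1 := by
      simp only [hc]; rw [mul_comm]; exact hpow2 (k+1)
    have hwhmem : (2⁻¹:ℝ) • (v k + ((2:ℝ)^(k+1)) • Tail (k+1)) ∈ W (k+1) := by
      have h1 := (hWconv (k+1)) (hv k) (hwstar k)
        (by norm_num : (0:ℝ) ≤ 2⁻¹) (by norm_num : (0:ℝ) ≤ 2⁻¹) (by norm_num : (2⁻¹:ℝ) + 2⁻¹ = 1)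
      rwa [← smul_add] at h1
    have hid : Z k + q k • ((2⁻¹:ℝ) • (v k + ((2:ℝ)^(k+1)) • Tail (k+1))) = h := by
      rw [smul_smul, hqc2, smul_add, smul_smul, hck2, one_smul]
      rw [← add_assoc, ← hZsucc k]
      exact hsplit (k+1)
    have hmin' := hmin k _ hwhmem
    rw [hid] at hmin'
    have happly : (Z k + q k • v k) b = Z k b + q k * v k b := by
      simp [ContinuousMap.add_apply, ContinuousMap.smul_apply]
    have hZkb : sg * Z k b + sg * Tail k b = ‖h‖ := by
      have h1 : (Z k + Tail k) b = h b := by rw [hsplit k]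
      simp only [ContinuousMap.add_apply] at h1
      calc sg * Z k b + sg * Tail k b = sg * (Z k b + Tail k b) := by ring
        _ = sg * h b := by rw [h1]
        _ = ‖h‖ := by rw [hsgh, hnorm_b]
    have hcomb : sg * Z k b + q k * (sg * v k b) ≤ ‖h‖ + δ k := by
      calc sg * Z k b + q k * (sg * v k b) = sg * (Z k b + q k * v k b) := by ring
        _ = sg * (Z k + q k • v k) b := by rw [happly]
        _ ≤ ‖Z k + q k • v k‖ := hφle _
        _ ≤ ‖h‖ + δ k := hmin'
    have : τ k = sg * Tail k b := rfl
    linarith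
  have hτrec : ∀ k, τ k = c k * (sg * v k b) + τ (k+1) := by
    intro k
    have h2 : Tail k b = c k * v k b + Tail (k+1) b := by
      rw [hTailrec k]
      simp [ContinuousMap.add_apply, ContinuousMap.smul_apply]
    simp only [hτ]
    rw [h2]; ring
  set p : ℕ → ℝ := fun k => (2:ℝ)^k * τ k with hp
  have hE' : ∀ k, sg * v k b ≤ p k + ε * (2⁻¹:ℝ)^(k+3) := by
    intro k
    have h1 := keyE k
    have h2 : (2:ℝ)^k * (q k * (sg * v k b)) ≤ (2:ℝ)^k * (τ k + δ k) :=
      mul_le_mul_of_nonneg_left h1 (by positivity)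
    have h3 : (2:ℝ)^k * q k = 1 := hpow2 k
    have hL : (2:ℝ)^k * (q k * (sg * v k b)) = sg * v k b := by
      rw [← mul_assoc, h3, one_mul]
    have h4 : (2:ℝ)^k * δ k = ε * (2⁻¹:ℝ)^(k+3) := by
      simp only [hδ]
      rw [show 2*k+3 = k + (k+3) from by omega, pow_add]
      calc (2:ℝ)^k * (ε * ((2⁻¹)^k * (2⁻¹)^(k+3)))
          = ((2:ℝ)^k * (2⁻¹)^k) * (ε * (2⁻¹)^(k+3)) := by ring
        _ = ε * (2⁻¹)^(k+3) := by rw [hpow2 k, one_mul]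
    have hR : (2:ℝ)^k * (τ k + δ k) = p k + (2:ℝ)^k * δ k := by
      simp only [hp]; ring
    rw [hL, hR, h4] at h2
    exact h2
  have hprec : ∀ k, p (k+1) = 2 * p k - sg * v k b := by
    intro k
    have h1 := hτrec k
    have h2 : (2:ℝ)^(k+1) * c k = 1 := by simp only [hc]; exact hpow2 (k+1)
    have hτk1 : τ (k+1) = τ k - c k * (sg * v k b) := by linarith
    simp only [hp]
    rw [hτk1]
    calc (2:ℝ)^(k+1) * (τ k - c k * (sg * v k b))
        = 2 * ((2:ℝ)^k * τ k) - ((2:ℝ)^(k+1) * c k) * (sg * v k b) := by rw [pow_succ]; ring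
      _ = 2 * ((2:ℝ)^k * τ k) - sg * v k b := by rw [h2, one_mul]
  have hlow : ∀ k, ‖h‖ - ε/4 + ε * (2⁻¹:ℝ)^(k+2) ≤ p k := by
    intro k
    induction k with
    | zero =>
      have hpz : p 0 = ‖h‖ := by simp only [hp, pow_zero, one_mul]; exact hτ0
      rw [hpz]
      have : ε * (2⁻¹:ℝ)^(0+2) = ε/4 := by rw [pow_succ, pow_succ, pow_zero]; ring
      linarith
    | succ k ih =>
      have h1 := hprec k
      have h2 := hE' k
      have h3 : p k - ε * (2⁻¹:ℝ)^(k+3) ≤ p (k+1) := by linarith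
      have h4' : ε * (2⁻¹:ℝ)^(k+2) = 2 * (ε * (2⁻¹:ℝ)^(k+3)) := by
        rw [show k+3 = (k+2)+1 from rfl, pow_succ]; ring
      rw [show k+1+2 = k+3 from by omega]
      linarith
  have hup : ∀ k, τ k ≤ (2⁻¹:ℝ)^k * M := by
    intro k
    calc τ k ≤ ‖Tail k‖ := hφle (Tail k)
      _ ≤ (2⁻¹:ℝ)^k * M := hTailnorm k
  have htend : Tendsto (fun n => sg * u n b) atTop (𝓝 0) := by
    have h1 := (hu b).const_mul sg
    simpa using h1
  have hev : ∀ᶠ n in atTop, sg * u n b < ε/4 :=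
    htend.eventually_lt_const (by positivity)
  obtain ⟨K, hK⟩ := eventually_atTop.mp hev
  have hak : ∀ k, K ≤ k → sg * v k b ≤ ε/4 := by
    intro k hk
    have hcl : IsClosed {w : C(X,ℝ) | sg * w b ≤ ε/4} :=
      isClosed_le (continuous_const.mul (continuous_eval_const b)) continuous_const
    have hconvset : Convex ℝ {w : C(X,ℝ) | sg * w b ≤ ε/4} := by
      intro w1 hw1 w2 hw2 a bb ha hbb hab
      simp only [Set.mem_setOf_eq] at hw1 hw2 ⊢
      have he : (a • w1 + bb • w2) b = a * w1 b + bb * w2 b := by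
        simp [ContinuousMap.add_apply, ContinuousMap.smul_apply]
      rw [he]
      have m1 := mul_le_mul_of_nonneg_left hw1 ha
      have m2 := mul_le_mul_of_nonneg_left hw2 hbb
      nlinarith
    have hhalf : W (k+1) ⊆ {w : C(X,ℝ) | sg * w b ≤ ε/4} := by
      apply closure_minimal _ hcl
      apply convexHull_min _ hconvset
      rintro y ⟨m, hm, rfl⟩
      have hm' : k+1 ≤ m := hm
      exact (hK m (by omega)).le
    exact hhalf (hv k)
  have htel : ∀ m, K ≤ m → τ K ≤ τ m + ε/4 * ((2⁻¹:ℝ)^K - (2⁻¹:ℝ)^m) := by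
    intro m hm
    induction m, hm using Nat.le_induction with
    | base => simp
    | succ m hm ih =>
      have h1 := hτrec m
      have hmul : c m * (sg * v m b) ≤ c m * (ε/4) :=
        mul_le_mul_of_nonneg_left (hak m hm) (hcpos m).le
      have hcm' : c m * (ε/4) = ε/4 * ((2⁻¹:ℝ)^m - (2⁻¹:ℝ)^(m+1)) := by
        simp only [hc]; rw [pow_succ]; ring
      linarith
  have hfinal : ‖h‖ ≤ ε/2 := by
    have hbound : ∀ m, K ≤ m → ‖h‖ - ε/2 ≤ (2:ℝ)^K * ((2⁻¹:ℝ)^m * M) := by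
      intro m hm
      have h1 := htel m hm
      have h2 : τ K ≤ τ m + ε/4 * (2⁻¹:ℝ)^K := by
        have hpos : (0:ℝ) ≤ (2⁻¹:ℝ)^m := by positivity
        nlinarith
      have hKpos : (0:ℝ) < (2:ℝ)^K := by positivity
      have h3 : p K ≤ (2:ℝ)^K * τ m + ε/4 := by
        have hmm := mul_le_mul_of_nonneg_left h2 hKpos.le
        simp only [hp]
        calc (2:ℝ)^K * τ K ≤ (2:ℝ)^K * (τ m + ε/4 * (2⁻¹:ℝ)^K) := hmm
          _ = (2:ℝ)^K * τ m + ((2:ℝ)^K * (2⁻¹)^K) * (ε/4) := by ring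
          _ = (2:ℝ)^K * τ m + ε/4 := by rw [hpow2 K]; ring
      have h4 : (2:ℝ)^K * τ m ≤ (2:ℝ)^K * ((2⁻¹:ℝ)^m * M) :=
        mul_le_mul_of_nonneg_left (hup m) hKpos.le
      have h5 : ‖h‖ - ε/4 ≤ p K := by
        have h6 := hlow K
        have hge : (0:ℝ) ≤ ε * (2⁻¹:ℝ)^(K+2) := by positivity
        linarith
      linarith
    have htend0 : Tendsto (fun m => (2:ℝ)^K * ((2⁻¹:ℝ)^m * M)) atTop (𝓝 0) := by
      have h1 := tendsto_pow_atTop_nhds_zero_of_lt_one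
        (by norm_num : (0:ℝ) ≤ 2⁻¹) (by norm_num : (2⁻¹:ℝ) < 1)
      have h2 := (h1.mul_const M).const_mul ((2:ℝ)^K)
      simpa using h2
    have h7 := ge_of_tendsto htend0 (eventually_atTop.mpr ⟨K, hbound⟩)
    linarith
  -- conclusion
  have hhW : h ∈ W 0 := by
    rw [hh]
    refine tsum_mem_closed_convex (hWconv 0) (hWclosed 0)
      (fun k => hWmono (by omega) (hv k)) (fun k => (hcpos k).le) ?_ S1
    have h1 := hcsum 0
    simpa using h1
  have hcls : h ∈ closure (convexHull ℝ (u '' Set.Ici 0)) := hhW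
  rw [Metric.mem_closure_iff] at hcls
  obtain ⟨w, hwmem, hdist⟩ := hcls (ε/4) (by positivity)
  refine ⟨w, convexHull_mono (Set.image_subset_range u _) hwmem, ?_⟩
  have hwn : ‖w‖ - ‖h‖ ≤ ‖w - h‖ := norm_sub_norm_le _ _
  have : ‖w - h‖ = dist h w := by rw [dist_eq_norm, norm_sub_rev]
  linarith

private lemma clusterPt_unique {α : Type*} [TopologicalSpace α] [T2Space α]
    {u : ℕ → α} {a b : α} (h : MapClusterPt a atTop u) (h' : Tendsto u atTop (𝓝 b)) : a = b := by
  have hne : (𝓝 a ⊓ map u atTop).NeBot := h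
  exact eq_of_nhds_neBot (hne.mono (inf_le_inf_left _ h'))

private lemma tendsto_of_abs_lt_one_div {u : ℕ → ℝ} {L : ℝ} {K : ℕ}
    (h : ∀ k, K ≤ k → |u k - L| < 1 / ((k:ℝ) + 1)) : Tendsto u atTop (𝓝 L) := by
  rw [Metric.tendsto_atTop]
  intro ε hε
  obtain ⟨N, hN⟩ := exists_nat_one_div_lt (K := ℝ) hε
  refine ⟨max K N, fun n hn => ?_⟩
  have h1 : K ≤ n := le_trans (le_max_left _ _) hn
  have h2 : (N:ℝ) ≤ (n:ℝ) := by exact_mod_cast le_trans (le_max_right _ _) hn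
  calc dist (u n) L = |u n - L| := Real.dist_eq _ _
    _ < 1 / ((n:ℝ)+1) := h n h1
    _ ≤ 1 / ((N:ℝ)+1) := by
        apply one_div_le_one_div_of_le <;> linarith
    _ < ε := hN

private lemma clusterPt_mem_closed {α : Type*} [TopologicalSpace α] {u : ℕ → α} {a : α}
    {C : Set α} (h : MapClusterPt a atTop u) (hC : IsClosed C) (hu : ∀ n, u n ∈ C) : a ∈ C := by
  have hle : map u atTop ≤ 𝓟 C := le_principal_iff.mpr (mem_map.mpr (Eventually.of_forall hu))
  have : ClusterPt a (𝓟 C) := h.clusterPt.mono hle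
  rw [← hC.closure_eq]
  exact mem_closure_iff_clusterPt.mpr this

private lemma exists_net {X : Type*} [TopologicalSpace X] [CompactSpace X]
    (g : X → ℝ) (r : ℝ) (hgb : ∀ x, |g x| ≤ r) (l : ℕ → C(X,ℝ)) (n : ℕ) :
    ∃ D : Finset X, ∀ x : X, ∃ d ∈ D, |g x - g d| < 1/((n:ℝ)+1) ∧
      ∀ i ≤ n, |l i x - l i d| < 1/((n:ℝ)+1) := by
  classical
  set δ : ℝ := 1/((n:ℝ)+1) with hδdef
  have hδ : 0 < δ := by positivity
  set Φ : X → (Fin (n+2) → ℝ) := fun x j => if (j : ℕ) = 0 then g x else l ((j:ℕ) - 1) x with hΦ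
  set R : Fin (n+2) → ℝ := fun j => if (j:ℕ) = 0 then r else ‖l ((j:ℕ)-1)‖ with hR
  have hranmem : ∀ x, Φ x ∈ Set.pi Set.univ (fun j => Set.Icc (-(R j)) (R j)) := by
    intro x j _
    have habs : |Φ x j| ≤ R j := by
      by_cases hj : (j:ℕ) = 0
      · simp only [hΦ, hR, if_pos hj]; exact hgb x
      · simp only [hΦ, hR, if_neg hj]
        rw [← Real.norm_eq_abs]
        exact (l _).norm_coe_le_norm x
    exact Set.mem_Icc.mpr ⟨neg_le_of_abs_le habs, le_of_abs_le habs⟩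
  have hKc : IsCompact (closure (Set.range Φ)) := by
    refine IsCompact.of_isClosed_subset
      (isCompact_univ_pi (fun j => isCompact_Icc (a := -(R j)) (b := R j)))
      isClosed_closure
      (closure_minimal ?_ (isClosed_set_pi (fun j _ => isClosed_Icc (a := -(R j)) (b := R j))))
    rintro p ⟨x, rfl⟩
    exact hranmem x
  have hcov : closure (Set.range Φ) ⊆ ⋃ x : X, Metric.ball (Φ x) δ := by
    intro p hp
    obtain ⟨p', ⟨x, rfl⟩, hdist⟩ := Metric.mem_closure_iff.mp hp δ hδ
    exact Set.mem_iUnion.mpr ⟨x, Metric.mem_ball.mpr hdist⟩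
  obtain ⟨D, hD⟩ := hKc.elim_finite_subcover (fun x => Metric.ball (Φ x) δ)
    (fun x => Metric.isOpen_ball) hcov
  refine ⟨D, fun x => ?_⟩
  have hx : Φ x ∈ ⋃ d ∈ D, Metric.ball (Φ d) δ := hD (subset_closure ⟨x, rfl⟩)
  obtain ⟨d, hd, hball⟩ := Set.mem_iUnion₂.mp hx
  have hdist : dist (Φ x) (Φ d) < δ := Metric.mem_ball.mp hball
  have hcoord : ∀ j : Fin (n+2), |Φ x j - Φ d j| < δ := by
    intro j
    calc |Φ x j - Φ d j| = dist (Φ x j) (Φ d j) := (Real.dist_eq _ _).symm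
      _ ≤ dist (Φ x) (Φ d) := dist_le_pi_dist _ _ j
      _ < δ := hdist
  refine ⟨d, hd, ?_, ?_⟩
  · have := hcoord ⟨0, by omega⟩
    simpa only [hΦ, if_pos rfl] using this
  · intro i hi
    have := hcoord ⟨i+1, by omega⟩
    have h1 : ((⟨i+1, by omega⟩ : Fin (n+2)) : ℕ) = i+1 := rfl
    simp only [hΦ, h1, if_neg (Nat.succ_ne_zero i), Nat.add_sub_cancel] at this
    exact this

private lemma exists_pointwise_seq {X : Type*} [TopologicalSpace X] [CompactSpace X]
    (A : Set C(X, ℝ)) {r : ℝ} (hbdd : ∀ f ∈ A, ∀ x : X, |f x| ≤ r)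
    (hcp : ∀ f : ℕ → C(X, ℝ), (∀ n, f n ∈ A) →
      ∃ g : C(X, ℝ), MapClusterPt (g : X → ℝ) atTop (fun n => (f n : X → ℝ)))
    (g : X → ℝ) (hg : g ∈ closure ((fun f : C(X, ℝ) => (f : X → ℝ)) '' A)) :
    ∃ f : ℕ → C(X, ℝ), (∀ n, f n ∈ A) ∧ ∀ x, Tendsto (fun n => f n x) atTop (𝓝 (g x)) := by
  classical
  have hgb : ∀ x, |g x| ≤ r := by
    intro x
    have hcl : IsClosed {p : X → ℝ | |p x| ≤ r} :=
      isClosed_le (continuous_apply x).abs continuous_const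
    have hsub : (fun f : C(X,ℝ) => (f : X → ℝ)) '' A ⊆ {p | |p x| ≤ r} := by
      rintro p ⟨q, hq, rfl⟩
      exact hbdd q hq x
    exact (closure_minimal hsub hcl) hg
  -- approximation of g on finite sets by members of A
  have happrox : ∀ (D : Finset X) (n : ℕ), ∃ q, q ∈ A ∧
      ∀ d ∈ D, |q d - g d| < 1/((n:ℝ)+1) := by
    intro D n
    have hδ : (0:ℝ) < 1/((n:ℝ)+1) := by positivity
    have hopen : IsOpen {p : X → ℝ | ∀ d ∈ D, |p d - g d| < 1/((n:ℝ)+1)} := by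
      have heq : {p : X → ℝ | ∀ d ∈ D, |p d - g d| < 1/((n:ℝ)+1)}
          = ⋂ d ∈ D, {p : X → ℝ | |p d - g d| < 1/((n:ℝ)+1)} := by
        ext p; simp
      rw [heq]
      refine isOpen_biInter_finset fun d _ => ?_
      exact isOpen_lt ((continuous_apply d).sub continuous_const).abs continuous_const
    have hgmem : g ∈ {p : X → ℝ | ∀ d ∈ D, |p d - g d| < 1/((n:ℝ)+1)} := by
      intro d _; simpa using hδ
    obtain ⟨p, hpU, hpA⟩ := _root_.mem_closure_iff.mp hg _ hopen hgmem
    obtain ⟨q, hq, rfl⟩ := hpA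
    exact ⟨q, hq, hpU⟩
  choose appr happrA happrspec using happrox
  have hnet := fun (l : ℕ → C(X,ℝ)) (n : ℕ) => exists_net g r hgb l n
  choose net hnetspec using hnet
  -- the recursive construction
  let tr : (ℕ → C(X,ℝ)) → ℕ → (ℕ → C(X,ℝ)) := fun v k i => if i ≤ k then v i else 0
  let Dof : (ℕ → C(X,ℝ)) → ℕ → Finset X := fun v n =>
    (Finset.range n).biUnion fun k => net (tr v k) k
  let F : ℕ → (ℕ → C(X,ℝ)) := fun n =>
    Nat.rec (fun _ => 0) (fun n Fn => Function.update Fn n (appr (Dof Fn n) n)) n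
  let f : ℕ → C(X,ℝ) := fun n => appr (Dof (F n) n) n
  have hFsucc : ∀ n, F (n+1) = Function.update (F n) n (appr (Dof (F n) n) n) := fun n => rfl
  have hFstable : ∀ m n, n < m → F m n = f n := by
    intro m
    induction m with
    | zero => intro n hn; omega
    | succ m ih =>
      intro n hn
      rw [hFsucc]
      rcases Nat.lt_succ_iff_lt_or_eq.mp hn with hlt | heq
      · rw [Function.update_of_ne (by omega)]
        exact ih n hlt
      · subst heq
        rw [Function.update_self]
  have htr : ∀ m k, k < m → tr (F m) k = tr f k := by
    intro m k hkm
    funext i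
    show (if i ≤ k then F m i else 0) = (if i ≤ k then f i else 0)
    split
    · exact hFstable m i (by omega)
    · rfl
  have hDof : ∀ n, Dof (F n) n = (Finset.range n).biUnion fun k => net (tr f k) k := by
    intro n
    refine Finset.biUnion_congr rfl fun k hk => ?_
    rw [htr n k (Finset.mem_range.mp hk)]
  have hfA : ∀ n, f n ∈ A := fun n => happrA _ _
  have hfapp' : ∀ n k, k < n → ∀ d ∈ net (tr f k) k, |f n d - g d| < 1/((n:ℝ)+1) := by
    intro n k hk d hd
    refine happrspec (Dof (F n) n) n d ?_
    rw [hDof n]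
    exact Finset.mem_biUnion.mpr ⟨k, Finset.mem_range.mpr hk, hd⟩
  have hnetf : ∀ k, ∀ x : X, ∃ d ∈ net (tr f k) k,
      |g x - g d| < 1/((k:ℝ)+1) ∧ ∀ i ≤ k, |f i x - f i d| < 1/((k:ℝ)+1) := by
    intro k x
    obtain ⟨d, hd, h1, h2⟩ := hnetspec (tr f k) k x
    refine ⟨d, hd, h1, fun i hi => ?_⟩
    have h3 := h2 i hi
    have h4 : tr f k i = f i := if_pos hi
    rwa [h4] at h3
  refine ⟨f, hfA, fun x => ?_⟩
  by_contra hnot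
  rw [Metric.tendsto_atTop] at hnot
  push_neg at hnot
  obtain ⟨δ, hδpos, hfreq⟩ := hnot
  obtain ⟨ψ, hψmono, hψ⟩ := Filter.extraction_of_frequently_atTop
    (frequently_atTop.mpr fun N => by
      obtain ⟨n, hn, hn'⟩ := hfreq N
      exact ⟨n, hn, hn'⟩)
  obtain ⟨h', hh'⟩ := hcp (fun n => f (ψ n)) (fun n => hfA _)
  have hagree : ∀ k, ∀ d ∈ net (tr f k) k, h' d = g d := by
    intro k d hd
    have htd : Tendsto (fun m => f m d) atTop (𝓝 (g d)) := by
      apply tendsto_of_abs_lt_one_div (K := k+1)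
      intro m hm
      exact hfapp' m k (by omega) d hd
    have htd' : Tendsto (fun n => f (ψ n) d) atTop (𝓝 (g d)) :=
      htd.comp hψmono.tendsto_atTop
    have hcl : MapClusterPt (h' d) atTop (fun n => f (ψ n) d) :=
      hh'.continuousAt_comp (continuous_apply d).continuousAt
    exact clusterPt_unique hcl htd'
  have hdex : ∀ k : ℕ, ∃ d, d ∈ net (tr f k) k ∧ |g x - g d| < 1/((k:ℝ)+1) ∧
      ∀ i ≤ k, |f i x - f i d| < 1/((k:ℝ)+1) := by
    intro k
    obtain ⟨d, h1, h2, h3⟩ := hnetf k x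
    exact ⟨d, h1, h2, h3⟩
  choose dseq hdmem hdg hdf using hdex
  obtain ⟨z, hz⟩ := exists_clusterPt_of_compactSpace (map dseq atTop)
  have hzc : MapClusterPt z atTop dseq := hz
  have hfz : ∀ i, f i z = f i x := by
    intro i
    have ht : Tendsto (fun k => f i (dseq k)) atTop (𝓝 (f i x)) := by
      apply tendsto_of_abs_lt_one_div (K := i)
      intro k hk
      have h5 := hdf k i hk
      rwa [abs_sub_comm] at h5
    have hcl : MapClusterPt (f i z) atTop (fun k => f i (dseq k)) :=
      hzc.continuousAt_comp (map_continuous (f i)).continuousAt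
    exact clusterPt_unique hcl ht
  have hgz : h' z = g x := by
    have ht : Tendsto (fun k => h' (dseq k)) atTop (𝓝 (g x)) := by
      apply tendsto_of_abs_lt_one_div (K := 0)
      intro k _
      rw [hagree k _ (hdmem k), abs_sub_comm]
      exact hdg k
    have hcl : MapClusterPt (h' z) atTop (fun k => h' (dseq k)) :=
      hzc.continuousAt_comp (map_continuous h').continuousAt
    exact clusterPt_unique hcl ht
  have hclx : MapClusterPt (h' z) atTop (fun n => f (ψ n) z) :=
    hh'.continuousAt_comp (continuous_apply z).continuousAt
  have hclx' : MapClusterPt (h' z) atTop (fun n => f (ψ n) x) := by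
    have heq : (fun n => f (ψ n) z) = fun n => f (ψ n) x := funext fun n => hfz (ψ n)
    rwa [heq] at hclx
  have hmemC : h' z ∈ {t : ℝ | δ ≤ |t - g x|} := by
    refine clusterPt_mem_closed hclx'
      (isClosed_le continuous_const (continuous_id.sub continuous_const).abs) fun n => ?_
    have h6 := hψ n
    rwa [Real.dist_eq] at h6
  rw [hgz] at hmemC
  simp only [Set.mem_setOf_eq, sub_self, abs_zero] at hmemC
  linarith

/-- Definability of types: let `X` be compact and `A ⊆ C(X)` norm-bounded and
countably precompact for the topology of pointwise convergence.  Then every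
function in the pointwise closure of `A` is the uniform limit of a sequence
from the convex hull of `A`. -/
theorem definability_of_types {X : Type*} [TopologicalSpace X] [CompactSpace X]
    (A : Set C(X, ℝ)) (hbdd : ∃ r : ℝ, ∀ f ∈ A, ∀ x : X, |f x| ≤ r)
    (hcp : ∀ f : ℕ → C(X, ℝ), (∀ n, f n ∈ A) →
      ∃ g : C(X, ℝ), MapClusterPt (g : X → ℝ) atTop (fun n => (f n : X → ℝ))) :
    ∀ g ∈ closure ((fun f : C(X, ℝ) => (f : X → ℝ)) '' A),
      ∃ h : ℕ → C(X, ℝ), (∀ n, h n ∈ convexHull ℝ A) ∧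
        TendstoUniformly (fun n => ⇑(h n)) g atTop := by
  classical
  intro g hg
  obtain ⟨r, hr⟩ := hbdd
  have hAne : A.Nonempty := by
    by_contra hA
    rw [Set.not_nonempty_iff_eq_empty] at hA
    rw [hA] at hg
    simp at hg
  obtain ⟨f₀, hf₀⟩ := hAne
  rcases isEmpty_or_nonempty X with hX | hX
  · refine ⟨fun _ => f₀, fun n => subset_convexHull ℝ A hf₀, ?_⟩
    rw [Metric.tendstoUniformly_iff]
    intro ε hε
    filter_upwards with n x
    exact absurd (Nonempty.intro x) (not_nonempty_iff.mpr hX)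
  · obtain ⟨f, hfA, hfp⟩ := exists_pointwise_seq A hr hcp g hg
    obtain ⟨h₀, hh₀⟩ := hcp f hfA
    have hgtend : Tendsto (fun n => (f n : X → ℝ)) atTop (𝓝 g) := by
      rw [tendsto_pi_nhds]; exact fun x => hfp x
    have hgeq : (h₀ : X → ℝ) = g := clusterPt_unique hh₀ hgtend
    set u : ℕ → C(X,ℝ) := fun n => f n - h₀ with hu
    have hupt : ∀ x, Tendsto (fun n => u n x) atTop (𝓝 0) := by
      intro x
      have h1 : Tendsto (fun n => f n x - h₀ x) atTop (𝓝 (g x - h₀ x)) :=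
        (hfp x).sub tendsto_const_nhds
      have h2 : g x - h₀ x = 0 := by
        have : h₀ x = g x := congrFun hgeq x
        rw [this, sub_self]
      rw [h2] at h1
      have h3 : (fun n => u n x) = fun n => f n x - h₀ x := by
        funext n; simp [hu, ContinuousMap.sub_apply]
      rw [h3]
      exact h1
    have hgb : ∀ x, |g x| ≤ r := fun x =>
      le_of_tendsto ((hfp x).abs) (Eventually.of_forall fun n => hr _ (hfA n) x)
    have hr0 : 0 ≤ r := le_trans (abs_nonneg _) (hgb (Classical.arbitrary X))
    have hfn : ∀ n, ‖f n‖ ≤ r := fun n => (ContinuousMap.norm_le _ hr0).mpr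
      (fun x => by rw [Real.norm_eq_abs]; exact hr _ (hfA n) x)
    have hh₀n : ‖h₀‖ ≤ r := (ContinuousMap.norm_le _ hr0).mpr (fun x => by
      rw [Real.norm_eq_abs]
      have hx : h₀ x = g x := congrFun hgeq x
      rw [hx]; exact hgb x)
    have hM : ∀ n, ‖u n‖ ≤ r + r := fun n =>
      le_trans (norm_sub_le _ _) (add_le_add (hfn n) hh₀n)
    have key : ∀ n : ℕ, ∃ w ∈ convexHull ℝ (Set.range u), ‖w‖ < 1/((n:ℝ)+1) :=
      fun n => simons_step u (r+r) hM hupt (by positivity)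
    choose w hwmem hwnorm using key
    -- translate back by h₀
    have htrans : ∀ n, ∃ y, y ∈ convexHull ℝ A ∧ y - h₀ = w n := by
      intro n
      set T : C(X,ℝ) ≃ᵃ[ℝ] C(X,ℝ) := AffineEquiv.constVAdd ℝ C(X,ℝ) (-h₀) with hT
      have hTy : ∀ y : C(X,ℝ), T y = y - h₀ := by
        intro y
        show -h₀ +ᵥ y = y - h₀
        rw [vadd_eq_add, sub_eq_neg_add]
      have himg : Set.range u = (T : C(X,ℝ) →ᵃ[ℝ] C(X,ℝ)) '' Set.range f := by
        ext y
        constructor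
        · rintro ⟨n, rfl⟩
          exact ⟨f n, ⟨n, rfl⟩, by rw [AffineEquiv.coe_toAffineMap, hTy]⟩
        · rintro ⟨z, ⟨n, rfl⟩, rfl⟩
          exact ⟨n, by rw [AffineEquiv.coe_toAffineMap, hTy]⟩
      have haff := AffineMap.image_convexHull (T : C(X,ℝ) →ᵃ[ℝ] C(X,ℝ)) (Set.range f)
      have hmem := hwmem n
      rw [himg, ← haff] at hmem
      obtain ⟨y, hy, hyw⟩ := hmem
      refine ⟨y, ?_, ?_⟩
      · exact convexHull_mono (Set.range_subset_iff.mpr hfA) hy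
      · rw [AffineEquiv.coe_toAffineMap, hTy] at hyw
        exact hyw
    choose y hymem hyw using htrans
    refine ⟨y, hymem, ?_⟩
    rw [Metric.tendstoUniformly_iff]
    intro ε hε
    obtain ⟨N, hN⟩ := exists_nat_one_div_lt (K := ℝ) hε
    rw [eventually_atTop]
    refine ⟨N, fun n hn x => ?_⟩
    have h1 : dist (g x) (y n x) = |(y n - h₀) x| := by
      rw [Real.dist_eq]
      have hx : h₀ x = g x := congrFun hgeq x
      simp only [ContinuousMap.sub_apply]
      rw [hx, abs_sub_comm]
    have h2 : |(y n - h₀) x| ≤ ‖y n - h₀‖ := by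
      rw [← Real.norm_eq_abs]
      exact (y n - h₀).norm_coe_le_norm x
    have h3 : ‖y n - h₀‖ < 1/((n:ℝ)+1) := by
      rw [hyw n]
      exact hwnorm n
    have h4 : 1/((n:ℝ)+1) ≤ 1/((N:ℝ)+1) := by
      apply one_div_le_one_div_of_le
      · positivity
      · have : (N:ℝ) ≤ (n:ℝ) := by exact_mod_cast hn
        linarith
    calc dist (g x) (y n x) = |(y n - h₀) x| := h1
      _ ≤ ‖y n - h₀‖ := h2
      _ < 1/((n:ℝ)+1) := h3
      _ ≤ 1/((N:ℝ)+1) := h4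
      _ < ε := hN
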